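/- Assume X₀ is ℱ₀-measurable and ‖X₀‖_∞ < ∞. Fix an integer m ≥ 1 and for i ≥ 1 set X_{i,m} = Σ_{j=(i−1)m+1}^{im} X_j and D_{i,m} = X_{i,m} − E(X_{i,m} | ℱ_{(i−1)m}). Then for every real σ² ≥ 0, limsup_{n→∞} ‖ (1/n) Σ_{j=1}^{[n/m]} E( D_{j,m}² | ℱ_{(j−1)m} ) − σ² ‖_∞ ≤ m^{−1} ‖E(S_m | ℱ₀)‖_∞² + ‖ m^{−1} E(S_m² | ℱ₀) − σ² ‖_∞, where [x] denotes the integer part of x. -/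

import Mathlib

open MeasureTheory Filter Finset
open scoped ENNReal Topology

lemma aux_condexp_comp {Ω : Type*} [m0 : MeasurableSpace Ω] (μ : Measure Ω)
    [IsProbabilityMeasure μ] (φ : Ω → Ω) (hφ : MeasurePreserving φ μ μ)
    (F0 : MeasurableSpace Ω) (hF0m : F0 ≤ m0) (f : Ω → ℝ) (hf : Integrable f μ) :
    μ[f ∘ φ | MeasurableSpace.comap φ F0] =ᵐ[μ] (μ[f|F0]) ∘ φ := by
  letI : MeasurableSpace Ω := m0
  have hφm : @Measurable Ω Ω m0 m0 φ := hφ.measurable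
  have hcomap : MeasurableSpace.comap φ F0 ≤ m0 := by
    rintro s ⟨t, ht, rfl⟩
    exact hφm (hF0m t ht)
  have hsm : StronglyMeasurable[F0] (μ[f|F0]) := stronglyMeasurable_condExp
  have hmeasφ : @Measurable Ω Ω (MeasurableSpace.comap φ F0) F0 φ :=
    Measurable.of_comap_le le_rfl
  have hint : Integrable (f ∘ φ) μ :=
    (hφ.integrable_comp hf.aestronglyMeasurable).2 hf
  have hcomp_int : Integrable ((μ[f|F0]) ∘ φ) μ :=
    (hφ.integrable_comp integrable_condExp.aestronglyMeasurable).2 integrable_condExp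
  refine (ae_eq_condExp_of_forall_setIntegral_eq hcomap hint
    (fun s _ _ => hcomp_int.integrableOn) ?_ ?_).symm
  · rintro s ⟨t, ht, rfl⟩ -
    have htm : @MeasurableSet Ω m0 t := hF0m t ht
    have key : ∀ (g : Ω → ℝ), AEStronglyMeasurable g μ →
        ∫ x in φ ⁻¹' t, g (φ x) ∂μ = ∫ x in t, g x ∂μ := by
      intro g hg
      calc ∫ x in φ ⁻¹' t, g (φ x) ∂μ
          = ∫ x, (φ ⁻¹' t).indicator (fun x => g (φ x)) x ∂μ :=
            (integral_indicator (hφm htm)).symm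
        _ = ∫ x, t.indicator g (φ x) ∂μ := rfl
        _ = ∫ y, t.indicator g y ∂μ := by
            have hgi : AEStronglyMeasurable (t.indicator g) (Measure.map φ μ) := by
              rw [hφ.map_eq]; exact hg.indicator htm
            rw [← integral_map hφm.aemeasurable hgi, hφ.map_eq]
        _ = ∫ x in t, g x ∂μ := integral_indicator htm
    simp only [Function.comp_apply]
    rw [key _ integrable_condExp.aestronglyMeasurable, key f hf.aestronglyMeasurable,
      setIntegral_condExp hF0m hf ht]
  · exact StronglyMeasurable.aestronglyMeasurable (hsm.comp_measurable hmeasφ)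

set_option maxHeartbeats 1000000 in
theorem stmt_19 {Ω : Type*} [m0 : MeasurableSpace Ω] (μ : Measure Ω) [IsProbabilityMeasure μ]
    (T : Ω → Ω) (hTbij : Function.Bijective T) (hT : MeasurePreserving T μ μ)
    (F0 : MeasurableSpace Ω) (hF0m : F0 ≤ m0) (hF0T : F0 ≤ MeasurableSpace.comap T F0)
    (F : ℕ → MeasurableSpace Ω) (hF : ∀ k, F k = MeasurableSpace.comap (T^[k]) F0)
    (X0 : Ω → ℝ) (hX0meas : @Measurable Ω ℝ F0 _ X0) (hX0b : eLpNorm X0 ⊤ μ < ⊤)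
    (X : ℕ → Ω → ℝ) (hX : ∀ i, X i = X0 ∘ T^[i])
    (S : ℕ → Ω → ℝ) (hS : ∀ k, S k = fun ω => ∑ j ∈ Finset.Icc 1 k, X j ω)
    (m : ℕ) (hm : 1 ≤ m)
    (Xm : ℕ → Ω → ℝ)
    (hXm : ∀ i, Xm i = fun ω => ∑ j ∈ Finset.Icc ((i - 1) * m + 1) (i * m), X j ω)
    (D : ℕ → Ω → ℝ)
    (hD : ∀ i, D i = fun ω => Xm i ω - (μ[Xm i|F ((i - 1) * m)]) ω)
    (σ2 : ℝ) (hσ2 : 0 ≤ σ2) :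
    limsup (fun n : ℕ =>
        eLpNorm (fun ω => (n : ℝ)⁻¹ *
          (∑ j ∈ Finset.Icc 1 (n / m), (μ[(fun ω' => D j ω' ^ 2)|F ((j - 1) * m)]) ω)
            - σ2) ⊤ μ) atTop ≤
      ((m : ℝ≥0∞))⁻¹ * (eLpNorm (μ[S m|F0]) ⊤ μ) ^ 2 +
        eLpNorm (fun ω => (m : ℝ)⁻¹ * (μ[(fun ω' => S m ω' ^ 2)|F0]) ω - σ2) ⊤ μ := by
  letI : MeasurableSpace Ω := m0
  classical
  have hm' : (0:ℝ) < (m:ℝ) := by exact_mod_cast hm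
  have hmne : ((m:ℝ)) ≠ 0 := ne_of_gt hm'
  have hTm : @Measurable Ω Ω m0 m0 T := hT.measurable
  have hTk : ∀ k : ℕ, MeasurePreserving (T^[k]) μ μ := fun k => hT.iterate k
  have hTkm : ∀ k : ℕ, Measurable (T^[k]) := fun k => hTm.iterate k
  have hX0m : Measurable X0 := hX0meas.mono hF0m le_rfl
  -- transfer of a.e. statements under iterates of T
  have hcompae : ∀ (k : ℕ) (p : Ω → Prop), MeasurableSet {ω | p ω} →
      (∀ᵐ ω ∂μ, p ω) → ∀ᵐ ω ∂μ, p (T^[k] ω) := by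
    intro k p hp h
    rw [ae_iff] at h ⊢
    have hs : {ω | ¬ p (T^[k] ω)} = T^[k] ⁻¹' {ω | ¬ p ω} := rfl
    have hs2 : ({ω | ¬ p ω} : Set Ω) = {ω | p ω}ᶜ := rfl
    rw [hs, hs2, (hTk k).measure_preimage hp.compl.nullMeasurableSet, ← hs2, h]
  -- generic bounds
  have hbd_eLp : ∀ (f : Ω → ℝ) (c : ℝ), (∀ᵐ ω ∂μ, |f ω| ≤ c) →
      eLpNorm f ⊤ μ ≤ ENNReal.ofReal c := by
    intro f c hc
    refine le_trans (eLpNorm_le_of_ae_bound (hc.mono fun ω h => by rwa [Real.norm_eq_abs])) ?_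
    simp
  have hae_of_fin : ∀ (f : Ω → ℝ), eLpNorm f ⊤ μ ≠ ⊤ →
      ∀ᵐ ω ∂μ, |f ω| ≤ (eLpNorm f ⊤ μ).toReal := by
    intro f hf
    filter_upwards [ae_le_eLpNormEssSup (f := f) (μ := μ)] with ω hω
    have h1 : ((‖f ω‖₊ : ℝ≥0∞)).toReal ≤ (eLpNormEssSup f μ).toReal :=
      ENNReal.toReal_mono (by rwa [← eLpNorm_exponent_top]) hω
    simpa [eLpNorm_exponent_top, Real.norm_eq_abs] using h1
  have hint_of_bd : ∀ (f : Ω → ℝ) (c : ℝ), Measurable f → (∀ᵐ ω ∂μ, |f ω| ≤ c) →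
      Integrable f μ := fun f c hf hb =>
    Integrable.mono' (integrable_const c) hf.aestronglyMeasurable
      (hb.mono fun ω h => by rwa [Real.norm_eq_abs])
  -- bound on X0 and S m
  set C : ℝ := (eLpNorm X0 ⊤ μ).toReal with hCdef
  have hC0 : 0 ≤ C := ENNReal.toReal_nonneg
  have hX0ae : ∀ᵐ ω ∂μ, |X0 ω| ≤ C := hae_of_fin X0 hX0b.ne
  clear_value C
  have hX_all : ∀ᵐ ω ∂μ, ∀ i : ℕ, |X0 (T^[i] ω)| ≤ C :=
    ae_all_iff.2 fun i => hcompae i _ (measurableSet_le hX0m.abs measurable_const) hX0ae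
  have hSmeas : Measurable (S m) := by
    rw [hS]
    exact Finset.measurable_sum _ (fun j _ => by rw [hX]; exact hX0m.comp (hTkm j))
  have hSb : ∀ᵐ ω ∂μ, |S m ω| ≤ m * C := by
    filter_upwards [hX_all] with ω hω
    rw [hS]
    calc |∑ j ∈ Finset.Icc 1 m, X j ω| ≤ ∑ j ∈ Finset.Icc 1 m, |X j ω| :=
          Finset.abs_sum_le_sum_abs _ _
      _ ≤ ∑ j ∈ Finset.Icc 1 m, C := Finset.sum_le_sum fun j _ => by
          rw [hX]; exact hω j
      _ = m * C := by simp [Finset.sum_const, Nat.card_Icc, nsmul_eq_mul]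
  have hSint : Integrable (S m) μ := hint_of_bd _ _ hSmeas hSb
  have hS2meas : Measurable (fun ω => S m ω ^ 2) := hSmeas.pow_const 2
  have hS2b : ∀ᵐ ω ∂μ, |S m ω ^ 2| ≤ (m * C)^2 := by
    filter_upwards [hSb] with ω h
    rw [abs_pow]
    exact pow_le_pow_left₀ (abs_nonneg _) h 2
  have hS2int : Integrable (fun ω => S m ω ^ 2) μ := hint_of_bd _ _ hS2meas hS2b
  -- conditional expectation facts
  have hhsm : StronglyMeasurable[F0] (μ[S m|F0]) := stronglyMeasurable_condExp
  have hhm : Measurable (μ[S m|F0]) := (hhsm.mono hF0m).measurable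
  have hhb : ∀ᵐ ω ∂μ, |(μ[S m|F0]) ω| ≤ m * C := by
    have h := ae_bdd_condExp_of_ae_bdd (m := F0) (μ := μ)
      (R := ⟨m * C, by positivity⟩) (f := S m) hSb
    exact h
  have hS2csm : StronglyMeasurable[F0] (μ[(fun ω' => S m ω' ^ 2)|F0]) := stronglyMeasurable_condExp
  have hS2cm : Measurable (μ[(fun ω' => S m ω' ^ 2)|F0]) := (hS2csm.mono hF0m).measurable
  have hS2condb : ∀ᵐ ω ∂μ, |(μ[(fun ω' => S m ω' ^ 2)|F0]) ω| ≤ (m * C)^2 := by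
    have h := ae_bdd_condExp_of_ae_bdd (m := F0) (μ := μ)
      (R := ⟨(m * C)^2, by positivity⟩) (f := fun ω' => S m ω' ^ 2) hS2b
    exact h
  -- finiteness of the two essential sup norms
  have hfin1 : eLpNorm (μ[S m|F0]) ⊤ μ ≠ ⊤ :=
    (lt_of_le_of_lt (hbd_eLp _ _ hhb) ENNReal.ofReal_lt_top).ne
  have hfin2 : eLpNorm (fun ω => (m : ℝ)⁻¹ * (μ[(fun ω' => S m ω' ^ 2)|F0]) ω - σ2) ⊤ μ ≠ ⊤ := by
    refine (lt_of_le_of_lt (hbd_eLp _ ((m:ℝ)⁻¹ * (m*C)^2 + σ2) ?_) ENNReal.ofReal_lt_top).ne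
    filter_upwards [hS2condb] with ω hω
    have hm0 : (0:ℝ) ≤ (m:ℝ)⁻¹ := by positivity
    calc |(m:ℝ)⁻¹ * (μ[(fun ω' => S m ω' ^ 2)|F0]) ω - σ2|
        ≤ |(m:ℝ)⁻¹ * (μ[(fun ω' => S m ω' ^ 2)|F0]) ω| + |σ2| := abs_sub _ _
      _ = (m:ℝ)⁻¹ * |(μ[(fun ω' => S m ω' ^ 2)|F0]) ω| + σ2 := by
          rw [abs_mul, abs_of_nonneg hm0, abs_of_nonneg hσ2]
      _ ≤ (m:ℝ)⁻¹ * (m*C)^2 + σ2 := by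
          exact add_le_add_left (mul_le_mul_of_nonneg_left hω hm0) _
  set b1 : ℝ := (eLpNorm (μ[S m|F0]) ⊤ μ).toReal with hb1def
  set b2 : ℝ := (eLpNorm (fun ω => (m : ℝ)⁻¹ * (μ[(fun ω' => S m ω' ^ 2)|F0]) ω - σ2) ⊤ μ).toReal
    with hb2def
  have hb1nn : 0 ≤ b1 := ENNReal.toReal_nonneg
  have hb2nn : 0 ≤ b2 := ENNReal.toReal_nonneg
  have hb1ae : ∀ᵐ ω ∂μ, |(μ[S m|F0]) ω| ≤ b1 := hae_of_fin _ hfin1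
  have hb2ae : ∀ᵐ ω ∂μ, |(m : ℝ)⁻¹ * (μ[(fun ω' => S m ω' ^ 2)|F0]) ω - σ2| ≤ b2 := by
    have h := hae_of_fin _ hfin2
    exact h
  clear_value b1 b2
  -- integrability of products
  have hprod_int : Integrable (fun ω => (μ[S m|F0]) ω * (μ[S m|F0]) ω) μ := by
    refine hint_of_bd _ ((m*C)*(m*C)) (hhm.mul hhm) ?_
    filter_upwards [hhb] with ω h
    rw [abs_mul]
    exact mul_le_mul h h (abs_nonneg _) (le_trans (abs_nonneg _) h)
  have h2h_int : Integrable (fun ω => (2 * (μ[S m|F0]) ω) * S m ω) μ := by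
    refine hint_of_bd _ (2 * (m*C) * (m*C)) ((measurable_const.mul hhm).mul hSmeas) ?_
    filter_upwards [hhb, hSb] with ω h1 h2
    rw [abs_mul, abs_mul, abs_two]
    have hmc : (0:ℝ) ≤ m * C := by positivity
    nlinarith [abs_nonneg ((μ[S m|F0]) ω), abs_nonneg (S m ω)]
  -- the key identity E((S-h)^2|F0) = E(S^2|F0) - h^2
  set g : Ω → ℝ := fun ω => (μ[(fun ω' => S m ω' ^ 2)|F0]) ω - ((μ[S m|F0]) ω)^2 with hgdef
  have hgmeas : Measurable g := by
    rw [hgdef]; exact hS2cm.sub (hhm.pow_const 2)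
  have key1 : μ[(fun ω => (S m ω - (μ[S m|F0]) ω)^2)|F0] =ᵐ[μ] g := by
    have hfe : (fun ω => (S m ω - (μ[S m|F0]) ω)^2)
        = ((fun ω => S m ω ^ 2 + (μ[S m|F0]) ω * (μ[S m|F0]) ω)
            - (fun ω => (2 * (μ[S m|F0]) ω) * S m ω)) := by
      funext ω; simp only [Pi.sub_apply]; ring
    have e_sub : μ[((fun ω => S m ω ^ 2 + (μ[S m|F0]) ω * (μ[S m|F0]) ω)
          - (fun ω => (2 * (μ[S m|F0]) ω) * S m ω))|F0]
        =ᵐ[μ] μ[(fun ω => S m ω ^ 2 + (μ[S m|F0]) ω * (μ[S m|F0]) ω)|F0]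
          - μ[(fun ω => (2 * (μ[S m|F0]) ω) * S m ω)|F0] :=
      condExp_sub (hS2int.add hprod_int) h2h_int F0
    have e_add : μ[(fun ω => S m ω ^ 2 + (μ[S m|F0]) ω * (μ[S m|F0]) ω)|F0]
        =ᵐ[μ] μ[(fun ω' => S m ω' ^ 2)|F0] + μ[(fun ω => (μ[S m|F0]) ω * (μ[S m|F0]) ω)|F0] :=
      condExp_add (f := fun ω' => S m ω' ^ 2)
        (g := fun ω => (μ[S m|F0]) ω * (μ[S m|F0]) ω) hS2int hprod_int F0
    have e_mul : μ[(fun ω => (2 * (μ[S m|F0]) ω) * S m ω)|F0]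
        =ᵐ[μ] (fun ω => (2 * (μ[S m|F0]) ω) * (μ[S m|F0]) ω) := by
      have h := condExp_mul_of_stronglyMeasurable_left (μ := μ)
        (f := fun ω => 2 * (μ[S m|F0]) ω) (g := S m)
        (stronglyMeasurable_const.mul stronglyMeasurable_condExp) h2h_int hSint
      exact h
    have e_hh : μ[(fun ω => (μ[S m|F0]) ω * (μ[S m|F0]) ω)|F0]
        = (fun ω => (μ[S m|F0]) ω * (μ[S m|F0]) ω) :=
      condExp_of_stronglyMeasurable hF0m
        (stronglyMeasurable_condExp.mul stronglyMeasurable_condExp) hprod_int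
    rw [hfe]
    refine e_sub.trans ?_
    rw [e_hh] at e_add
    filter_upwards [e_add, e_mul] with ω h2 h3
    simp only [Pi.sub_apply, Pi.add_apply] at h2 ⊢
    rw [h2, h3, hgdef]; ring
  -- bound on g
  have hgbd : ∀ᵐ ω ∂μ, |g ω - m * σ2| ≤ b1^2 + m * b2 := by
    filter_upwards [hb1ae, hb2ae] with ω h1 h2
    have h3 : g ω - m * σ2
        = ((m:ℝ) * ((m:ℝ)⁻¹ * (μ[(fun ω' => S m ω' ^ 2)|F0]) ω - σ2)) - ((μ[S m|F0]) ω)^2 := by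
      rw [hgdef]; field_simp; ring
    rw [h3]
    calc |((m:ℝ) * ((m:ℝ)⁻¹ * (μ[(fun ω' => S m ω' ^ 2)|F0]) ω - σ2)) - ((μ[S m|F0]) ω)^2|
        ≤ |(m:ℝ) * ((m:ℝ)⁻¹ * (μ[(fun ω' => S m ω' ^ 2)|F0]) ω - σ2)| + |((μ[S m|F0]) ω)^2| :=
          abs_sub _ _
      _ = (m:ℝ) * |(m:ℝ)⁻¹ * (μ[(fun ω' => S m ω' ^ 2)|F0]) ω - σ2| + |(μ[S m|F0]) ω|^2 := by
          rw [abs_mul, abs_of_nonneg (le_of_lt hm'), abs_pow]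
      _ ≤ (m:ℝ) * b2 + b1^2 :=
          add_le_add (mul_le_mul_of_nonneg_left h2 (le_of_lt hm'))
            (pow_le_pow_left₀ (abs_nonneg _) h1 2)
      _ = b1^2 + m * b2 := by ring
  have hgbd_all : ∀ᵐ ω ∂μ, ∀ k : ℕ, |g (T^[k] ω) - m * σ2| ≤ b1^2 + m * b2 :=
    ae_all_iff.2 fun k => hcompae k _
      (measurableSet_le ((hgmeas.sub measurable_const).abs) measurable_const) hgbd
  -- identification of the conditional variance of blocks
  have hSH2int : Integrable (fun ω => (S m ω - (μ[S m|F0]) ω)^2) μ := by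
    refine hint_of_bd _ ((2*(m*C))^2) ((hSmeas.sub hhm).pow_const 2) ?_
    filter_upwards [hSb, hhb] with ω h1 h2
    rw [abs_pow]
    refine pow_le_pow_left₀ (abs_nonneg _) ?_ 2
    calc |S m ω - (μ[S m|F0]) ω| ≤ |S m ω| + |(μ[S m|F0]) ω| := abs_sub _ _
      _ ≤ 2*(m*C) := by nlinarith
  have heq : ∀ i : ℕ, μ[(fun ω' => D (i+1) ω' ^ 2)|F (i*m)] =ᵐ[μ] (fun ω => g (T^[i*m] ω)) := by
    intro i
    have hXmS : Xm (i+1) = S m ∘ T^[i*m] := by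
      funext ω
      rw [hXm, hS]
      simp only [Function.comp_apply, Nat.add_sub_cancel]
      rw [show Finset.Icc (i*m+1) ((i+1)*m) = (Finset.Icc 1 m).map (addRightEmbedding (i*m)) by
        rw [Finset.map_add_right_Icc]; congr 1 <;> ring]
      rw [Finset.sum_map]
      refine Finset.sum_congr rfl fun l hl => ?_
      simp only [addRightEmbedding_apply]
      rw [hX, hX]
      simp only [Function.comp_apply]
      rw [Function.iterate_add_apply]
    have hFk : F (i*m) = MeasurableSpace.comap (T^[i*m]) F0 := hF _
    have e1 : μ[Xm (i+1)|F (i*m)] =ᵐ[μ] (μ[S m|F0]) ∘ T^[i*m] := by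
      rw [hXmS, hFk]
      exact aux_condexp_comp μ _ (hTk _) F0 hF0m (S m) hSint
    have e2 : (fun ω' => D (i+1) ω' ^ 2)
        =ᵐ[μ] (fun ω => (S m ω - (μ[S m|F0]) ω)^2) ∘ T^[i*m] := by
      filter_upwards [e1] with ω h1
      have hDval : D (i+1) ω = Xm (i+1) ω - (μ[Xm (i+1)|F (i*m)]) ω := by
        rw [hD]; simp only [Nat.add_sub_cancel]
      show D (i+1) ω ^ 2 = _
      rw [hDval, h1, hXmS]
      simp [Function.comp_apply]
    have e3 : μ[(fun ω' => D (i+1) ω' ^ 2)|F (i*m)]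
        =ᵐ[μ] (μ[(fun ω => (S m ω - (μ[S m|F0]) ω)^2)|F0]) ∘ T^[i*m] := by
      refine (condExp_congr_ae e2).trans ?_
      rw [hFk]
      exact aux_condexp_comp μ _ (hTk _) F0 hF0m _ hSH2int
    have e4 : (μ[(fun ω => (S m ω - (μ[S m|F0]) ω)^2)|F0]) ∘ T^[i*m]
        =ᵐ[μ] (fun ω => g (T^[i*m] ω)) := by
      have h := (hTk (i*m)).quasiMeasurePreserving.ae_eq_comp key1
      exact h
    exact e3.trans e4
  clear_value g
  -- the quantitative bound for each n ≥ 1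
  have hbound : ∀ n : ℕ, 1 ≤ n →
      eLpNorm (fun ω => (n : ℝ)⁻¹ *
          (∑ j ∈ Finset.Icc 1 (n / m), (μ[(fun ω' => D j ω' ^ 2)|F ((j - 1) * m)]) ω)
            - σ2) ⊤ μ
        ≤ (((m : ℝ≥0∞))⁻¹ * (eLpNorm (μ[S m|F0]) ⊤ μ) ^ 2 +
            eLpNorm (fun ω => (m : ℝ)⁻¹ * (μ[(fun ω' => S m ω' ^ 2)|F0]) ω - σ2) ⊤ μ)
          + ENNReal.ofReal (m * σ2) * (n : ℝ≥0∞)⁻¹ := by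
    intro n hn
    have hn' : (0:ℝ) < (n:ℝ) := by exact_mod_cast hn
    have heq_all : ∀ᵐ ω ∂μ, ∀ i : ℕ,
        (μ[(fun ω' => D (i+1) ω' ^ 2)|F (i*m)]) ω = g (T^[i*m] ω) := ae_all_iff.2 heq
    have hae : ∀ᵐ ω ∂μ, |(n : ℝ)⁻¹ *
        (∑ j ∈ Finset.Icc 1 (n / m), (μ[(fun ω' => D j ω' ^ 2)|F ((j - 1) * m)]) ω)
          - σ2| ≤ b1^2 * (m:ℝ)⁻¹ + b2 + m * σ2 / n := by
      filter_upwards [heq_all, hgbd_all] with ω h1 h2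
      set K := n / m with hK
      have hsum : (∑ j ∈ Finset.Icc 1 K, (μ[(fun ω' => D j ω' ^ 2)|F ((j - 1) * m)]) ω)
          = ∑ j ∈ Finset.Icc 1 K, g (T^[(j-1)*m] ω) := by
        refine Finset.sum_congr rfl fun j hj => ?_
        obtain ⟨hj1, _⟩ := Finset.mem_Icc.1 hj
        obtain ⟨i, rfl⟩ : ∃ i, j = i + 1 := ⟨j - 1, by omega⟩
        simpa [Nat.add_sub_cancel] using h1 i
      rw [hsum]
      have hdm : m * K + n % m = n := Nat.div_add_mod n m
      have hmod : n % m < m := Nat.mod_lt n (by omega)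
      have hKm_le : (K:ℝ) * m ≤ n := by
        have : (m:ℝ) * K + (n % m : ℕ) = n := by exact_mod_cast hdm
        have h0 : (0:ℝ) ≤ ((n % m : ℕ) : ℝ) := Nat.cast_nonneg _
        linarith
      have hub : (n:ℝ) ≤ K * m + m := by
        have : (m:ℝ) * K + (n % m : ℕ) = n := by exact_mod_cast hdm
        have : ((n % m : ℕ) : ℝ) < m := by exact_mod_cast hmod
        linarith [this]
      have hcard : (Finset.Icc 1 K).card = K := by rw [Nat.card_Icc]; exact Nat.add_sub_cancel K 1
      have habs1 : |∑ j ∈ Finset.Icc 1 K, (g (T^[(j-1)*m] ω) - m*σ2)| ≤ K * (b1^2 + m*b2) := by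
        calc |∑ j ∈ Finset.Icc 1 K, (g (T^[(j-1)*m] ω) - m*σ2)|
            ≤ ∑ j ∈ Finset.Icc 1 K, |g (T^[(j-1)*m] ω) - m*σ2| := Finset.abs_sum_le_sum_abs _ _
          _ ≤ ∑ j ∈ Finset.Icc 1 K, (b1^2 + m*b2) := Finset.sum_le_sum fun j _ => h2 _
          _ = K * (b1^2 + m*b2) := by rw [Finset.sum_const, hcard, nsmul_eq_mul]
      have expand : (n : ℝ)⁻¹ * (∑ j ∈ Finset.Icc 1 K, g (T^[(j-1)*m] ω)) - σ2
          = (n:ℝ)⁻¹ * (∑ j ∈ Finset.Icc 1 K, (g (T^[(j-1)*m] ω) - m*σ2))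
            + ((n:ℝ)⁻¹ * ((K:ℝ) * m) - 1) * σ2 := by
        rw [Finset.sum_sub_distrib, Finset.sum_const, hcard, nsmul_eq_mul]
        field_simp
        ring
      rw [expand]
      have e1 : |(n:ℝ)⁻¹ * (∑ j ∈ Finset.Icc 1 K, (g (T^[(j-1)*m] ω) - m*σ2))|
          ≤ (n:ℝ)⁻¹ * (K * (b1^2 + m*b2)) := by
        rw [abs_mul, abs_of_nonneg (by positivity : (0:ℝ) ≤ (n:ℝ)⁻¹)]
        exact mul_le_mul_of_nonneg_left habs1 (by positivity)
      have e2 : |((n:ℝ)⁻¹ * ((K:ℝ) * m) - 1) * σ2| ≤ ((m:ℝ) / n) * σ2 := by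
        rw [abs_mul, abs_of_nonneg hσ2]
        refine mul_le_mul_of_nonneg_right ?_ hσ2
        rw [abs_le]
        have hinv : (0:ℝ) ≤ (n:ℝ)⁻¹ := by positivity
        have hmul : (n:ℝ)⁻¹ * ((K:ℝ) * m) ≤ 1 := by
          rw [show (1:ℝ) = (n:ℝ)⁻¹ * n by field_simp]
          exact mul_le_mul_of_nonneg_left hKm_le hinv
        have h5 : (n:ℝ)⁻¹ * n = 1 := by field_simp
        have h6 : (n:ℝ)⁻¹ * ((n:ℝ) - (K:ℝ)*m) ≤ (n:ℝ)⁻¹ * m :=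
          mul_le_mul_of_nonneg_left (by linarith) hinv
        rw [mul_sub, h5] at h6
        have h7 : (m:ℝ)/n = (n:ℝ)⁻¹ * m := by ring
        constructor
        · rw [h7]; linarith
        · have h8 : (n:ℝ)⁻¹ * ((K:ℝ) * m) - 1 ≤ 0 := by linarith
          have h4 : (0:ℝ) ≤ (m:ℝ)/n := by positivity
          linarith
      have hKn : (n:ℝ)⁻¹ * ((K:ℝ) * (b1^2 + m*b2)) ≤ b1^2 * (m:ℝ)⁻¹ + b2 := by
        have h1' : (n:ℝ)⁻¹ * K ≤ (m:ℝ)⁻¹ := by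
          rw [show (n:ℝ)⁻¹ * K = (K:ℝ) / n by ring, show ((m:ℝ))⁻¹ = 1/(m:ℝ) by ring,
            div_le_div_iff₀ hn' hm']
          nlinarith
        have h2' : (0:ℝ) ≤ b1^2 + m*b2 := by positivity
        calc (n:ℝ)⁻¹ * ((K:ℝ) * (b1^2 + m*b2)) = ((n:ℝ)⁻¹ * K) * (b1^2 + m*b2) := by ring
          _ ≤ (m:ℝ)⁻¹ * (b1^2 + m*b2) := mul_le_mul_of_nonneg_right h1' h2'
          _ = b1^2 * (m:ℝ)⁻¹ + b2 := by field_simp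
      calc |(n:ℝ)⁻¹ * (∑ j ∈ Finset.Icc 1 K, (g (T^[(j-1)*m] ω) - m*σ2))
              + ((n:ℝ)⁻¹ * ((K:ℝ) * m) - 1) * σ2|
          ≤ |(n:ℝ)⁻¹ * (∑ j ∈ Finset.Icc 1 K, (g (T^[(j-1)*m] ω) - m*σ2))|
            + |((n:ℝ)⁻¹ * ((K:ℝ) * m) - 1) * σ2| := abs_add_le _ _
        _ ≤ (n:ℝ)⁻¹ * (K * (b1^2 + m*b2)) + ((m:ℝ)/n) * σ2 := add_le_add e1 e2
        _ ≤ (b1^2 * (m:ℝ)⁻¹ + b2) + m * σ2 / n := by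
            refine add_le_add hKn (le_of_eq (by ring))
    refine le_trans (hbd_eLp _ _ hae) ?_
    refine le_trans (le_trans ENNReal.ofReal_add_le
      (add_le_add_left ENNReal.ofReal_add_le _)) ?_
    have hA : ENNReal.ofReal (b1^2 * (m:ℝ)⁻¹)
        = ((m : ℝ≥0∞))⁻¹ * (eLpNorm (μ[S m|F0]) ⊤ μ) ^ 2 := by
      rw [ENNReal.ofReal_mul (by positivity), ENNReal.ofReal_pow hb1nn,
        ENNReal.ofReal_inv_of_pos hm', ENNReal.ofReal_natCast, hb1def,
        ENNReal.ofReal_toReal hfin1, mul_comm]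
    have hB : ENNReal.ofReal b2
        = eLpNorm (fun ω => (m : ℝ)⁻¹ * (μ[(fun ω' => S m ω' ^ 2)|F0]) ω - σ2) ⊤ μ := by
      rw [hb2def, ENNReal.ofReal_toReal hfin2]
    have hCn : ENNReal.ofReal (m * σ2 / n) = ENNReal.ofReal (m * σ2) * (n : ℝ≥0∞)⁻¹ := by
      rw [div_eq_mul_inv, ENNReal.ofReal_mul (by positivity), ENNReal.ofReal_inv_of_pos hn',
        ENNReal.ofReal_natCast]
    rw [hA, hB, hCn]
  -- conclusion via limsup
  have hev : (fun n : ℕ =>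
      eLpNorm (fun ω => (n : ℝ)⁻¹ *
          (∑ j ∈ Finset.Icc 1 (n / m), (μ[(fun ω' => D j ω' ^ 2)|F ((j - 1) * m)]) ω)
            - σ2) ⊤ μ) ≤ᶠ[atTop]
      (fun n : ℕ => (((m : ℝ≥0∞))⁻¹ * (eLpNorm (μ[S m|F0]) ⊤ μ) ^ 2 +
            eLpNorm (fun ω => (m : ℝ)⁻¹ * (μ[(fun ω' => S m ω' ^ 2)|F0]) ω - σ2) ⊤ μ)
          + ENNReal.ofReal (m * σ2) * (n : ℝ≥0∞)⁻¹) := by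
    filter_upwards [eventually_ge_atTop 1] with n hn
    exact hbound n hn
  refine le_trans (limsup_le_limsup hev) ?_
  have htend : Tendsto (fun n : ℕ => (((m : ℝ≥0∞))⁻¹ * (eLpNorm (μ[S m|F0]) ⊤ μ) ^ 2 +
            eLpNorm (fun ω => (m : ℝ)⁻¹ * (μ[(fun ω' => S m ω' ^ 2)|F0]) ω - σ2) ⊤ μ)
          + ENNReal.ofReal (m * σ2) * (n : ℝ≥0∞)⁻¹) atTop
      (𝓝 ((((m : ℝ≥0∞))⁻¹ * (eLpNorm (μ[S m|F0]) ⊤ μ) ^ 2 +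
            eLpNorm (fun ω => (m : ℝ)⁻¹ * (μ[(fun ω' => S m ω' ^ 2)|F0]) ω - σ2) ⊤ μ)
          + ENNReal.ofReal (m * σ2) * 0)) :=
    tendsto_const_nhds.add (ENNReal.Tendsto.const_mul ENNReal.tendsto_inv_nat_nhds_zero
      (Or.inr ENNReal.ofReal_ne_top))
  rw [mul_zero, add_zero] at htend
  exact htend.limsup_eq.le
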